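/- Let Φ : E^× × E^× × F^× → F^× × F^× × E^× be defined by Φ(t₁, t₂, ν) = (N(t₁t₂), ν·N(t₁), ν·t₁·ρ(t₂)). Then Φ is a group homomorphism which maps the subgroup { (z, z, N(z)) : z ∈ E^× } into the diagonal subgroup { (t, t, t) : t ∈ F^× }, and the induced homomorphism (E^× × E^× × F^×)/{(z, z, N(z)) : z ∈ E^×} → (F^× × F^× × E^×)/{(t, t, t) : t ∈ F^×} is a group isomorphism. (This describes the effect of the exceptional isomorphism PGU_E(V) ≅ PGU_B(Ṽ)⁰ on a maximal torus in the split case.) -/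

import Mathlib

/-- The subgroup `{(z, z, N(z)) : z ∈ E^×}` of `E^× × E^× × F^×`. -/
def normGraphSubgroup {F E : Type*} [Field F] [Field E] [Algebra F E]
    (N : Eˣ →* Fˣ) : Subgroup (Eˣ × Eˣ × Fˣ) where
  carrier := {x | ∃ z : Eˣ, x = (z, z, N z)}
  one_mem' := ⟨1, by simp; rfl⟩
  mul_mem' := by
    rintro x y ⟨z, rfl⟩ ⟨w, rfl⟩
    exact ⟨z * w, by simp [Prod.ext_iff]⟩
  inv_mem' := by
    rintro x ⟨z, rfl⟩
    exact ⟨z⁻¹, by simp [Prod.ext_iff]⟩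

/-- The diagonal subgroup `{(t, t, t) : t ∈ F^×}` of `F^× × F^× × E^×`. -/
def diagSubgroup (F E : Type*) [Field F] [Field E] [Algebra F E] :
    Subgroup (Fˣ × Fˣ × Eˣ) where
  carrier := {x | ∃ t : Fˣ, x = (t, t, Units.map (algebraMap F E).toMonoidHom t)}
  one_mem' := ⟨1, by simp; rfl⟩
  mul_mem' := by
    rintro x y ⟨z, rfl⟩ ⟨w, rfl⟩
    exact ⟨z * w, by simp [Prod.ext_iff]⟩
  inv_mem' := by
    rintro x ⟨z, rfl⟩
    exact ⟨z⁻¹, by simp [Prod.ext_iff]⟩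

/-- The map `Φ(t₁, t₂, ν) = (N(t₁t₂), ν·N(t₁), ν·t₁·ρ(t₂))` is a group
homomorphism `E^× × E^× × F^× → F^× × F^× × E^×` carrying `{(z,z,N(z))}` into the diagonal
`{(t,t,t)}`, and the induced map on quotients is a group isomorphism.  (This is the effect of
the exceptional isomorphism `PGU_E(V) ≅ PGU_B(Ṽ)⁰` on a maximal torus in the split case.) -/
theorem torus_isomorphism_split_case
    {F E : Type*} [Field F] [CharZero F] [Field E] [Algebra F E]
    (hquad : Module.finrank F E = 2)
    (ρ : E →+* E) (hρ_invol : ∀ a, ρ (ρ a) = a) (hρ_ne : ρ ≠ RingHom.id E)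
    (hρ_fixF : ∀ c : F, ρ (algebraMap F E c) = algebraMap F E c)
    (hρ_fixed_field : ∀ a : E, ρ a = a → ∃ c : F, algebraMap F E c = a)
    (N : Eˣ →* Fˣ) (hN : ∀ z : Eˣ, algebraMap F E (N z) = (z : E) * ρ (z : E)) :
    ∃ Φ : (Eˣ × Eˣ × Fˣ) →* (Fˣ × Fˣ × Eˣ),
      (∀ (t₁ t₂ : Eˣ) (ν : Fˣ),
        (Φ (t₁, t₂, ν)).1 = N (t₁ * t₂) ∧
        (Φ (t₁, t₂, ν)).2.1 = ν * N t₁ ∧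
        ((Φ (t₁, t₂, ν)).2.2 : E) = algebraMap F E ν * (t₁ : E) * ρ (t₂ : E)) ∧
      ∃ hle : normGraphSubgroup N ≤ Subgroup.comap Φ (diagSubgroup F E),
        Function.Bijective
          (QuotientGroup.map (normGraphSubgroup N) (diagSubgroup F E) Φ hle) := by
  have hinj : Function.Injective (algebraMap F E) := (algebraMap F E).injective
  set ρu : Eˣ →* Eˣ := Units.map ρ.toMonoidHom with hρudef
  set iu : Fˣ →* Eˣ := Units.map (algebraMap F E).toMonoidHom with hiudef
  have hρu_coe : ∀ z : Eˣ, ((ρu z : Eˣ) : E) = ρ (z : E) := fun z => rfl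
  have hiu_coe : ∀ t : Fˣ, ((iu t : Eˣ) : E) = algebraMap F E (t : F) := fun t => rfl
  have hNρ : ∀ c : Eˣ, N (ρu c) = N c := by
    intro c
    refine Units.ext (hinj ?_)
    rw [hN, hN, hρu_coe, hρ_invol, mul_comm]
  have hNi : ∀ b : Fˣ, N (iu b) = b * b := by
    intro b
    refine Units.ext (hinj ?_)
    simp only [hN, hiu_coe, hρ_fixF, Units.val_mul, map_mul]
  set Φ : (Eˣ × Eˣ × Fˣ) →* (Fˣ × Fˣ × Eˣ) :=
    { toFun := fun x => (N (x.1 * x.2.1), x.2.2 * N x.1, iu x.2.2 * x.1 * ρu x.2.1)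
      map_one' := by simp
      map_mul' := by
        intro x y
        simp only [Prod.fst_mul, Prod.snd_mul, map_mul, Prod.mk_mul_mk, Prod.mk.injEq]
        refine ⟨mul_mul_mul_comm _ _ _ _, ?_, ?_⟩ <;>
          simp only [mul_comm, mul_left_comm, mul_assoc] } with hΦdef
  have hΦ : ∀ x : Eˣ × Eˣ × Fˣ,
      Φ x = (N (x.1 * x.2.1), x.2.2 * N x.1, iu x.2.2 * x.1 * ρu x.2.1) := fun _ => rfl
  refine ⟨Φ, ?_, ?_, ?_, ?_⟩
  · intro t₁ t₂ ν
    refine ⟨rfl, rfl, ?_⟩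
    simp [hΦ, hρu_coe, hiu_coe, mul_assoc]
  · rintro x ⟨z, rfl⟩
    refine ⟨N z * N z, ?_⟩
    rw [hΦ]
    refine Prod.ext (by simp [map_mul]) (Prod.ext rfl (Units.ext ?_))
    simp only [Units.val_mul, hρu_coe, hiu_coe, Units.coe_map, MonoidHom.coe_coe,
      Units.val_mul, map_mul, hN]
    simp only [show ∀ x : F, (algebraMap F E).toMonoidHom x = algebraMap F E x from fun _ => rfl, hN]
    ring
  · -- injective
    rw [injective_iff_map_eq_one]
    intro q hq
    obtain ⟨x, rfl⟩ := QuotientGroup.mk_surjective q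
    rw [QuotientGroup.map_mk, QuotientGroup.eq_one_iff] at hq
    obtain ⟨t, ht⟩ := hq
    obtain ⟨a, b, ν⟩ := x
    rw [hΦ, Prod.ext_iff, Prod.ext_iff] at ht
    obtain ⟨h1, h2, h3⟩ := ht
    simp only [map_mul] at h1 h2 h3
    have hν : ν = N b := by
      refine mul_right_cancel (b := N a) ?_
      rw [h2, ← h1, mul_comm]
    have hab : a = b := by
      have h3' : algebraMap F E (ν : F) * ((a : E) * ρ (b : E)) = algebraMap F E (t : F) := by
        have := congrArg (Units.val) h3
        simpa [hiu_coe, hρu_coe, Units.coe_map, mul_assoc] using this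
      have ht' : algebraMap F E (t : F) = algebraMap F E (ν : F) * ((a : E) * ρ (a : E)) := by
        rw [← h2]
        push_cast [map_mul]
        rw [hN]
      have hνne : (algebraMap F E (ν : F)) ≠ 0 := by
        simpa using (map_ne_zero (algebraMap F E)).mpr ν.ne_zero
      have hcancel : (a : E) * ρ (b : E) = (a : E) * ρ (a : E) :=
        mul_left_cancel₀ hνne (h3'.trans ht')
      have hρab : ρ (b : E) = ρ (a : E) := mul_left_cancel₀ a.ne_zero hcancel
      have := congrArg ρ hρab
      rw [hρ_invol, hρ_invol] at this
      exact Units.ext this.symm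
    rw [QuotientGroup.eq_one_iff]
    exact ⟨a, by rw [hν, hab]⟩
  · -- surjective
    intro q
    obtain ⟨y, rfl⟩ := QuotientGroup.mk_surjective q
    obtain ⟨a, b, c⟩ := y
    refine ⟨QuotientGroup.mk (1, ρu c * (iu b)⁻¹, N c * a⁻¹ * b⁻¹), ?_⟩
    rw [QuotientGroup.map_mk, QuotientGroup.eq]
    refine ⟨a * (b * b) * (N c)⁻¹, ?_⟩
    rw [hΦ]
    simp only [Prod.inv_mk, Prod.mk_mul_mk, Prod.mk.injEq]
    refine ⟨?_, ?_, ?_⟩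
    · rw [one_mul, map_mul, hNρ, map_inv, hNi]
      refine Units.ext ?_
      push_cast
      field_simp
    · rw [map_one, mul_one]
      refine Units.ext ?_
      push_cast
      field_simp
    · refine Units.ext ?_
      have h1 : ((ρu (ρu c * (iu b)⁻¹) : Eˣ) : E) = (c : E) * (algebraMap F E (b : F))⁻¹ := by
        rw [hρu_coe]
        push_cast [map_mul, map_inv₀, hρu_coe, hiu_coe]
        rw [hρ_invol, hρ_fixF]
      simp only [Units.val_mul, Units.val_inv_eq_inv_val, h1, hiu_coe, Units.val_one, mul_one]
      push_cast [map_mul, map_inv₀]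
      simp only [Units.coe_map, show ∀ x : F, (algebraMap F E).toMonoidHom x = algebraMap F E x from fun _ => rfl, Units.val_inv_eq_inv_val, map_inv₀]
      have hNc : (algebraMap F E) ((N c : Fˣ) : F) ≠ 0 := (map_ne_zero _).mpr (N c).ne_zero
      field_simp
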